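/- Every vector q ∈ ℝ^{N+1} admits the decomposition q = Σ_{k=0}^{N-1} ( q_k − (k/(k+1)) q_{k+1} ) Δ^k + q_N Δ^N, where Δ^0 = (1,0,...,0) and for k ≥ 1, Δ^k_j = (j/k)·𝟙[j ≤ k]. Moreover, if q ∈ Q (i.e., q_{j-1} ≥ ((j-1)/j) q_j for all j), then every coefficient in this decomposition is nonnegative. -/

import Mathlib

/-- The vectors Δ^k: Δ^0 = (1,0,...,0), and Δ^k_j = (j/k)·𝟙[j ≤ k] for k ≥ 1. -/
noncomputable def Delta (k j : ℕ) : ℝ :=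
  if k = 0 then (if j = 0 then 1 else 0) else if j ≤ k then (j : ℝ) / (k : ℝ) else 0

lemma tele (g : ℕ → ℝ) (m n : ℕ) (h : m ≤ n) :
    ∑ k ∈ Finset.Ico m n, (g k - g (k + 1)) = g m - g n := by
  induction n, h using Nat.le_induction with
  | base => simp
  | succ n hn ih => rw [Finset.sum_Ico_succ_top hn, ih]; ring

/-- every q decomposes as
q = Σ_{k=0}^{N-1} (q_k − (k/(k+1)) q_{k+1}) Δ^k + q_N Δ^N, and for q ∈ Q all the
coefficients are nonnegative. -/
theorem stmt4 (N : ℕ) (hN : 2 ≤ N) (q : ℕ → ℝ) :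
    (∀ j ≤ N, q j =
      (∑ k ∈ Finset.range N, (q k - ((k : ℝ) / ((k : ℝ) + 1)) * q (k + 1)) * Delta k j)
        + q N * Delta N j) ∧
    ((∀ j ≤ N, 0 ≤ q j ∧ q j ≤ 1) →
      (∀ j, 1 ≤ j → j ≤ N → q (j - 1) ≥ (((j : ℝ) - 1) / (j : ℝ)) * q j) →
      (∀ k < N, 0 ≤ q k - ((k : ℝ) / ((k : ℝ) + 1)) * q (k + 1)) ∧ 0 ≤ q N) := by
  have hN0 : N ≠ 0 := by omega
  constructor
  · intro j hj
    rcases Nat.eq_zero_or_pos j with hj0 | hj1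
    · subst hj0
      have hsum : ∑ k ∈ Finset.range N,
          (q k - ((k : ℝ) / ((k : ℝ) + 1)) * q (k + 1)) * Delta k 0 = q 0 := by
        rw [Finset.sum_eq_single 0]
        · simp [Delta]
        · intro k _ hk0
          simp [Delta, hk0]
        · intro h; exact absurd (Finset.mem_range.mpr (by omega)) h
      have hD : Delta N 0 = 0 := by simp [Delta, hN0]
      rw [hsum, hD]; ring
    · have hj0 : j ≠ 0 := by omega
      have hjR : (j : ℝ) ≠ 0 := Nat.cast_ne_zero.mpr hj0
      rw [Finset.range_eq_Ico, ← Finset.sum_Ico_consecutive _ (Nat.zero_le j) hj]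
      have h1 : ∑ k ∈ Finset.Ico 0 j,
          (q k - ((k : ℝ) / ((k : ℝ) + 1)) * q (k + 1)) * Delta k j = 0 := by
        apply Finset.sum_eq_zero
        intro k hk
        rw [Finset.mem_Ico] at hk
        rcases eq_or_ne k 0 with h0 | h0
        · simp [Delta, h0, hj0]
        · have : ¬ j ≤ k := by omega
          simp [Delta, h0, this]
      have h2 : ∑ k ∈ Finset.Ico j N,
          (q k - ((k : ℝ) / ((k : ℝ) + 1)) * q (k + 1)) * Delta k j
          = ∑ k ∈ Finset.Ico j N, ((fun k => q k * ((j : ℝ) / (k : ℝ))) k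
              - (fun k => q k * ((j : ℝ) / (k : ℝ))) (k + 1)) := by
        apply Finset.sum_congr rfl
        intro k hk
        rw [Finset.mem_Ico] at hk
        have hk0 : k ≠ 0 := by omega
        have hkR : (k : ℝ) ≠ 0 := Nat.cast_ne_zero.mpr hk0
        have hk1R : (k : ℝ) + 1 ≠ 0 := by positivity
        have hjk : j ≤ k := hk.1
        simp only [Delta, hk0, if_false, hjk, if_true]
        push_cast
        field_simp
      rw [h1, h2, tele _ _ _ hj]
      have hD : Delta N j = (j : ℝ) / (N : ℝ) := by simp [Delta, hN0, hj]
      rw [hD]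
      field_simp
      ring
  · intro h1 h2
    refine ⟨?_, (h1 N le_rfl).1⟩
    intro k hk
    have := h2 (k + 1) (by omega) (by omega)
    simp only [Nat.add_sub_cancel] at this
    have h3 : (((k : ℝ) + 1) - 1) / ((k : ℝ) + 1) = (k : ℝ) / ((k : ℝ) + 1) := by ring_nf
    push_cast at this
    rw [h3] at this
    linarith
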